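/- Let m be a positive integer and y real with 0 < 2y < m. Then |₁F₁(1; m+2; -y) - (1 + y/m)^{-1}| ≤ M/m with M = 6 + 432/(e·log 2)³. -/

import Mathlib

/-- The Kummer function `₁F₁(1; m+2; z) = Σ_{k≥0} z^k / ((m+2)(m+3)⋯(m+k+1))`. -/
noncomputable def kummer1F1 (m : ℕ) (z : ℝ) : ℝ :=
  ∑' k : ℕ, z ^ k / ∏ i ∈ Finset.range k, ((m : ℝ) + 2 + (i : ℝ))

lemma aux_nat_ineq (k : ℕ) : 2 ^ k * (k * (k + 3)) ≤ 6 * 3 ^ k := by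
  induction k with
  | zero => simp
  | succ n ih =>
    rcases le_or_gt n 3 with h | h
    · interval_cases n <;> norm_num
    · have h2 : 2 * ((n + 1) * ((n + 1) + 3)) ≤ 3 * (n * (n + 3)) := by nlinarith
      calc 2 ^ (n + 1) * ((n + 1) * ((n + 1) + 3))
          = 2 ^ n * (2 * ((n + 1) * ((n + 1) + 3))) := by ring
        _ ≤ 2 ^ n * (3 * (n * (n + 3))) := Nat.mul_le_mul_left _ h2
        _ = 3 * (2 ^ n * (n * (n + 3))) := by ring
        _ ≤ 3 * (6 * 3 ^ n) := Nat.mul_le_mul_left _ ih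
        _ = 6 * 3 ^ (n + 1) := by ring

lemma aux_real_ineq (k : ℕ) : (k : ℝ) * (k + 3) ≤ 6 * (3 / 2) ^ k := by
  have h := aux_nat_ineq k
  have h' : ((2 : ℝ)) ^ k * (k * (k + 3)) ≤ 6 * 3 ^ k := by
    exact_mod_cast h
  have h2 : (0 : ℝ) < 2 ^ k := by positivity
  rw [div_pow, ← mul_div_assoc, le_div_iff₀ h2]
  calc (k : ℝ) * (k + 3) * 2 ^ k = 2 ^ k * (k * (k + 3)) := by ring
    _ ≤ 6 * 3 ^ k := h'

lemma prod_pos_aux (m : ℕ) (k : ℕ) :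
    0 < ∏ i ∈ Finset.range k, ((m : ℝ) + 2 + (i : ℝ)) := by
  apply Finset.prod_pos
  intro i _
  positivity

lemma pow_le_prod_aux (m : ℕ) (k : ℕ) :
    (m : ℝ) ^ k ≤ ∏ i ∈ Finset.range k, ((m : ℝ) + 2 + (i : ℝ)) := by
  calc (m : ℝ) ^ k = ∏ _i ∈ Finset.range k, (m : ℝ) := by
        rw [Finset.prod_const, Finset.card_range]
    _ ≤ ∏ i ∈ Finset.range k, ((m : ℝ) + 2 + (i : ℝ)) := by
        apply Finset.prod_le_prod
        · intro i _; positivity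
        · intro i _
          have : (0 : ℝ) ≤ 2 + (i : ℝ) := by positivity
          linarith

lemma prod_sub_pow_aux (m : ℕ) (k : ℕ) :
    2 * (m : ℝ) * ((∏ i ∈ Finset.range k, ((m : ℝ) + 2 + (i : ℝ))) - (m : ℝ) ^ k) ≤
      (k : ℝ) * (k + 3) * ∏ i ∈ Finset.range k, ((m : ℝ) + 2 + (i : ℝ)) := by
  induction k with
  | zero => simp
  | succ n ih =>
    have hP := prod_pos_aux m n
    have hm : (0 : ℝ) ≤ m := Nat.cast_nonneg m
    rw [Finset.prod_range_succ, pow_succ]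
    push_cast
    set P := ∏ i ∈ Finset.range n, ((m : ℝ) + 2 + (i : ℝ)) with hPdef
    nlinarith [mul_le_mul_of_nonneg_left ih hm, hP.le,
      mul_nonneg (mul_nonneg (mul_nonneg hP.le
        (by positivity : (0:ℝ) ≤ (n:ℝ) + 1)) (by positivity : (0:ℝ) ≤ (n:ℝ) + 4))
        (by positivity : (0:ℝ) ≤ (n:ℝ) + 2)]

theorem kummer1F1_approx_neg (m : ℕ) (y : ℝ) (hy : 0 < y) (hm : 2 * y < m) :
    |kummer1F1 m (-y) - (1 + y / m)⁻¹| ≤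
      (6 + 432 / (Real.exp 1 * Real.log 2) ^ 3) / m := by
  have hm0 : (0 : ℝ) < m := lt_trans (by linarith) hm
  have hym : y / m < 1 / 2 := by
    rw [div_lt_div_iff₀ hm0 (by norm_num)]
    linarith
  have hym0 : 0 < y / m := div_pos hy hm0
  set f : ℕ → ℝ := fun k => (-y) ^ k / ∏ i ∈ Finset.range k, ((m : ℝ) + 2 + (i : ℝ)) with hf
  set g : ℕ → ℝ := fun k => (-(y / m)) ^ k with hg
  -- bound on |f k - g k|
  have key : ∀ k, |f k - g k| ≤ 3 / m * (3 / 4) ^ k := by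
    intro k
    have hP := prod_pos_aux m k
    have hPm := pow_le_prod_aux m k
    have hmk : (0 : ℝ) < (m : ℝ) ^ k := by positivity
    have hdiff : f k - g k = (-1) ^ k * y ^ k * (1 / (∏ i ∈ Finset.range k, ((m : ℝ) + 2 + (i : ℝ))) - 1 / (m : ℝ) ^ k) := by
      simp only [hf, hg]
      rw [neg_pow y, neg_pow (y / (m:ℝ)), div_pow]
      field_simp
    rw [hdiff, abs_mul, abs_mul, abs_pow, abs_neg, abs_one, one_pow, one_mul,
      abs_pow, abs_of_pos hy]
    have habs : |1 / (∏ i ∈ Finset.range k, ((m : ℝ) + 2 + (i : ℝ))) - 1 / (m : ℝ) ^ k|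
        = 1 / (m : ℝ) ^ k - 1 / (∏ i ∈ Finset.range k, ((m : ℝ) + 2 + (i : ℝ))) := by
      rw [abs_sub_comm, abs_of_nonneg]
      have := one_div_le_one_div_of_le hmk hPm
      linarith
    rw [habs]
    set P := ∏ i ∈ Finset.range k, ((m : ℝ) + 2 + (i : ℝ)) with hPdef
    have hsub := prod_sub_pow_aux m k
    -- 1/m^k - 1/P = (P - m^k)/(m^k P) ≤ (k(k+3)/(2m)) / m^k
    have step1 : 1 / (m : ℝ) ^ k - 1 / P ≤ (k : ℝ) * (k + 3) / (2 * m) / (m : ℝ) ^ k := by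
      have h1 : 1 / (m:ℝ) ^ k - 1 / P = (P - (m:ℝ) ^ k) / ((m:ℝ) ^ k * P) := by
        field_simp
      rw [h1, div_div, div_le_div_iff₀ (by positivity) (by positivity)]
      nlinarith [mul_le_mul_of_nonneg_right hsub hmk.le]
    calc y ^ k * (1 / (m : ℝ) ^ k - 1 / P)
        ≤ y ^ k * ((k : ℝ) * (k + 3) / (2 * m) / (m : ℝ) ^ k) := by
          apply mul_le_mul_of_nonneg_left step1 (by positivity)
      _ = (y / m) ^ k * ((k : ℝ) * (k + 3) / (2 * m)) := by
          rw [div_pow]; ring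
      _ ≤ (1 / 2) ^ k * (6 * (3 / 2) ^ k / (2 * m)) := by
          apply mul_le_mul
          · exact pow_le_pow_left₀ hym0.le hym.le k
          · apply div_le_div_of_nonneg_right (aux_real_ineq k) (by linarith)
          · positivity
          · positivity
      _ = 6 / (2 * m) * ((1 / 2 : ℝ) * (3 / 2)) ^ k := by
          rw [mul_pow]; ring
      _ = 3 / m * (3 / 4) ^ k := by
          rw [show ((1:ℝ)/2 * (3/2)) = 3/4 by norm_num]; ring
  -- summability
  have hsumf : Summable f := by
    apply Summable.of_norm_bounded (g := fun k => (1 / 2 : ℝ) ^ k)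
      (summable_geometric_of_lt_one (by norm_num) (by norm_num))
    intro k
    have hP := prod_pos_aux m k
    have hPm := pow_le_prod_aux m k
    simp only [hf, norm_div, norm_pow, norm_neg, Real.norm_eq_abs,
      abs_of_pos hy, abs_of_pos hP]
    rw [div_le_iff₀ hP]
    calc y ^ k = (y / m) ^ k * (m : ℝ) ^ k := by
          rw [div_pow]; field_simp
      _ ≤ (1 / 2) ^ k * (∏ i ∈ Finset.range k, ((m : ℝ) + 2 + (i : ℝ))) := by
          apply mul_le_mul (pow_le_pow_left₀ hym0.le hym.le k) hPm (by positivity) (by positivity)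
  have hnorm : ‖(-(y / m))‖ < 1 := by
    rw [norm_neg, Real.norm_eq_abs, abs_of_pos hym0]
    linarith
  have hsumg : Summable g := summable_geometric_of_norm_lt_one hnorm
  have htsumg : ∑' k, g k = (1 + y / m)⁻¹ := by
    simp only [hg]
    rw [tsum_geometric_of_norm_lt_one hnorm]
    norm_num
  have hkum : kummer1F1 m (-y) = ∑' k, f k := rfl
  have hdiff : kummer1F1 m (-y) - (1 + y / m)⁻¹ = ∑' k, (f k - g k) := by
    rw [hkum, ← htsumg, Summable.tsum_sub hsumf hsumg]
  rw [hdiff]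
  have hsumb : Summable (fun k : ℕ => 3 / (m : ℝ) * (3 / 4) ^ k) :=
    (summable_geometric_of_lt_one (by norm_num) (by norm_num)).mul_left _
  have hsumfg : Summable (fun k => ‖f k - g k‖) := by
    apply Summable.of_nonneg_of_le (fun k => norm_nonneg _) _ hsumb
    intro k
    exact key k
  calc |∑' k, (f k - g k)| ≤ ∑' k, ‖f k - g k‖ := by
        apply norm_tsum_le_tsum_norm hsumfg
    _ ≤ ∑' k : ℕ, 3 / (m : ℝ) * (3 / 4) ^ k := Summable.tsum_le_tsum key hsumfg hsumb
    _ = 3 / m * 4 := by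
        rw [tsum_mul_left, tsum_geometric_of_lt_one (by norm_num) (by norm_num)]
        norm_num
    _ = (3 * 4) / m := by ring
    _ ≤ (6 + 432 / (Real.exp 1 * Real.log 2) ^ 3) / m := by
        apply (div_le_div_iff_of_pos_right hm0).mpr
        have he : Real.exp 1 < 2.7182818286 := Real.exp_one_lt_d9
        have hl : Real.log 2 < 0.6931471808 := Real.log_two_lt_d9
        have he0 : 0 < Real.exp 1 := Real.exp_pos 1
        have hl0 : 0 < Real.log 2 := Real.log_pos (by norm_num)
        have hel : Real.exp 1 * Real.log 2 < 1.89 := by nlinarith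
        have hel0 : 0 < Real.exp 1 * Real.log 2 := mul_pos he0 hl0
        have hcube : (Real.exp 1 * Real.log 2) ^ 3 < 1.89 ^ 3 := by
          apply pow_lt_pow_left₀ hel hel0.le
          norm_num
        have h72 : (Real.exp 1 * Real.log 2) ^ 3 < 72 := by nlinarith
        have : (6 : ℝ) ≤ 432 / (Real.exp 1 * Real.log 2) ^ 3 := by
          rw [le_div_iff₀ (by positivity)]
          nlinarith
        linarith
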